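/- Let r_CC, r_CD, r_DC, r_DD be reals with r_DC > r_CC > r_DD > r_CD, and 0 < γ < 1. Then there exists exactly one Q-table Q : S × A → ℝ satisfying, for all s ∈ S and a1 ∈ A, Q(s,a1) = (1/2)·(r_{a1 C} + γ·max_a Q((a1,C),a)) + (1/2)·(r_{a1 D} + γ·max_a Q((a1,D),a)); this unique solution is constant in the state coordinate, given by Q(s,D) = (r_DD + r_DC)/(2(1−γ)) and Q(s,C) = (r_CD + r_CC)/2 + γ·(r_DD + r_DC)/(2(1−γ)), and it satisfies Q(s,D) > Q(s,C) for every state s, i.e., its greedy policy is always-defect. -/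
import Mathlib


inductive Act | C | D
deriving DecidableEq

open Act

abbrev State := Act × Act

/-- against a uniformly random opponent (ε = 1/2), the self-play
Bellman equation has exactly one solution; it is constant in the state, given by the
stated formulas, and its greedy policy is always-defect. -/
theorem random_opponent_unique_fixed_point
    (rCC rCD rDC rDD : ℝ)
    (h1 : rDC > rCC) (h2 : rCC > rDD) (h3 : rDD > rCD)
    (r : Act → Act → ℝ)
    (hrCC : r C C = rCC) (hrCD : r C D = rCD)
    (hrDC : r D C = rDC) (hrDD : r D D = rDD)
    (γ : ℝ) (hγ0 : 0 < γ) (hγ1 : γ < 1) :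
    (∃! Q : State → Act → ℝ, ∀ (s : State) (a1 : Act),
        Q s a1 = (1 / 2) * (r a1 C + γ * max (Q (a1, C) C) (Q (a1, C) D))
          + (1 / 2) * (r a1 D + γ * max (Q (a1, D) C) (Q (a1, D) D)))
    ∧ ∀ Q : State → Act → ℝ,
        (∀ (s : State) (a1 : Act),
          Q s a1 = (1 / 2) * (r a1 C + γ * max (Q (a1, C) C) (Q (a1, C) D))
            + (1 / 2) * (r a1 D + γ * max (Q (a1, D) C) (Q (a1, D) D))) →
        ∀ s : State,
          Q s D = (rDD + rDC) / (2 * (1 - γ)) ∧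
          Q s C = (rCD + rCC) / 2 + γ * (rDD + rDC) / (2 * (1 - γ)) ∧
          Q s D > Q s C := by
  have h1γ : (0:ℝ) < 1 - γ := by linarith
  have h2γ : (2 * (1 - γ) : ℝ) ≠ 0 := by positivity
  obtain ⟨qD, hqD⟩ : ∃ x : ℝ, x = (rDD + rDC) / (2 * (1 - γ)) := ⟨_, rfl⟩
  obtain ⟨qC, hqC⟩ : ∃ x : ℝ, x = (rCD + rCC) / 2 + γ * (rDD + rDC) / (2 * (1 - γ)) := ⟨_, rfl⟩
  have hqDeq : qD * (2 * (1 - γ)) = rDD + rDC := by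
    rw [hqD, div_mul_cancel₀ _ h2γ]
  have hgt : qC < qD := by
    have hq : qC = (rCD + rCC) / 2 + γ * qD := by rw [hqC, hqD, mul_div_assoc]
    have h' : 2 * qD - 2 * (γ * qD) = rDD + rDC := by linear_combination hqDeq
    linarith
  -- key lemma: any solution is the constant one
  have key : ∀ Q : State → Act → ℝ,
      (∀ (s : State) (a1 : Act),
        Q s a1 = (1 / 2) * (r a1 C + γ * max (Q (a1, C) C) (Q (a1, C) D))
          + (1 / 2) * (r a1 D + γ * max (Q (a1, D) C) (Q (a1, D) D))) →
      ∀ s : State, Q s C = qC ∧ Q s D = qD := by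
    intro Q hQ
    have hconst : ∀ (s : State) (a : Act), Q s a = Q (C, C) a := by
      intro s a; rw [hQ s a, hQ (C, C) a]
    set fC := Q (C, C) C with hfCdef
    set fD := Q (C, C) D with hfDdef
    have hC := hQ (C, C) C
    rw [hconst (C, D) C, hconst (C, D) D, hrCC, hrCD] at hC
    have hD := hQ (C, C) D
    rw [hconst (D, C) C, hconst (D, C) D, hconst (D, D) C, hconst (D, D) D,
      hrDC, hrDD] at hD
    have hlt : fC < fD := by linarith
    rw [max_eq_right hlt.le] at hC hD
    have hfD : fD = qD := by
      rw [hqD, eq_div_iff h2γ]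
      linear_combination 2 * hD
    have hfC : fC = qC := by
      rw [hqC]
      linear_combination hC + γ * hfD + γ * hqD
    intro s
    rw [hconst s C, hconst s D]
    exact ⟨hfC, hfD⟩
  constructor
  · refine ⟨fun _ a => match a with | C => qC | D => qD, ?_, ?_⟩
    · intro s a1
      have hm : max qC qD = qD := max_eq_right hgt.le
      cases a1 <;> simp only [hrCC, hrCD, hrDC, hrDD, hm]
      · rw [hqC, hqD]; field_simp; ring
      · rw [hqD]; field_simp; ring
    · intro Q hQ
      funext s a
      cases a
      · exact (key Q hQ s).1
      · exact (key Q hQ s).2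
  · intro Q hQ s
    obtain ⟨hc, hd⟩ := key Q hQ s
    exact ⟨by rw [hd, hqD], by rw [hc, hqC], by rw [hc, hd]; exact hgt⟩
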